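/- (Existence of left limits of the M^p-valued segment map.) Let r > 0, p ∈ [2, ∞), T > 0, and let Y : [-r, T] → ℝ^d be a càdlàg function. For t ∈ (0, T] define Y_t^− : [-r, 0] → ℝ^d by Y_t^−(θ) = Y(t + θ) for θ ∈ [-r, 0) and Y_t^−(0) = lim_{u → t⁻} Y(u). Then lim_{ε → 0⁺} ( ∫_{-r}^0 |Y(t − ε + θ) − Y_t^−(θ)|^p dθ + |Y(t − ε) − Y_t^−(0)|^p ) = 0. Together with right-continuity, this shows that the M^p-valued segment map t ↦ (Y_t, Y(t)) is càdlàg on [0, T]. -/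

import Mathlib

open MeasureTheory Set Filter Topology
open scoped ENNReal

/-- A function `f : ℝ → E` is càdlàg on `[a, b]`: right-continuous at every point
and with (finite) left limits at every point. -/
def CadlagOn {E : Type*} [TopologicalSpace E] (a b : ℝ) (f : ℝ → E) : Prop :=
  (∀ t ∈ Set.Icc a b, ContinuousWithinAt f (Set.Icc t b) t) ∧
  (∀ t ∈ Set.Ioc a b, ∃ L, Filter.Tendsto f (nhdsWithin t (Set.Ico a t)) (nhds L))

open Filter Topology in
/-- A right-continuous function, cut off outside `[a, b]`, is strongly measurable. -/
lemma cadlag_aux_sm {d : ℕ} (a b : ℝ) (f : ℝ → EuclideanSpace ℝ (Fin d))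
    (hf : ∀ t ∈ Icc a b, ContinuousWithinAt f (Icc t b) t) :
    StronglyMeasurable ((Icc a b).indicator f) := by
  set q : ℕ → ℝ → ℝ := fun n x => min b (⌈x * 2 ^ n⌉ / 2 ^ n) with hq
  refine stronglyMeasurable_of_tendsto (f := fun n => (Icc a b).indicator (fun x => f (q n x)))
    atTop (fun n => ?_) (tendsto_pi_nhds.mpr fun x => ?_)
  · apply StronglyMeasurable.indicator _ measurableSet_Icc
    have : (fun x => f (q n x)) =
        (fun k : ℤ => f (min b ((k : ℝ) / 2 ^ n))) ∘ (fun x : ℝ => ⌈x * 2 ^ n⌉) := rfl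
    rw [this]
    exact ((measurable_of_countable _).comp
      (Int.measurable_ceil.comp (measurable_id.mul_const _))).stronglyMeasurable
  · by_cases hx : x ∈ Icc a b
    · simp only [Set.indicator_of_mem hx]
      have h2n : ∀ n : ℕ, (0:ℝ) < 2 ^ n := fun n => by positivity
      have hmem : ∀ n, q n x ∈ Icc x b := by
        intro n
        refine ⟨le_min hx.2 ?_, min_le_left _ _⟩
        rw [le_div_iff₀ (h2n n)]
        exact Int.le_ceil _
      have hle : ∀ n, q n x ≤ x + (2⁻¹) ^ n := by
        intro n
        refine (min_le_right _ _).trans ?_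
        rw [div_le_iff₀ (h2n n)]
        have := (Int.ceil_lt_add_one (x * 2 ^ n)).le
        calc (⌈x * 2 ^ n⌉ : ℝ) ≤ x * 2 ^ n + 1 := this
          _ = (x + (2⁻¹) ^ n) * 2 ^ n := by
              rw [add_mul, inv_pow, inv_mul_cancel₀ (h2n n).ne']
      have htend : Tendsto (fun n => q n x) atTop (𝓝 x) := by
        have hupper : Tendsto (fun n : ℕ => x + (2⁻¹ : ℝ) ^ n) atTop (𝓝 (x + 0)) :=
          tendsto_const_nhds.add (tendsto_pow_atTop_nhds_zero_of_lt_one (by norm_num)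
            (by norm_num))
        rw [add_zero] at hupper
        exact tendsto_of_tendsto_of_tendsto_of_le_of_le tendsto_const_nhds hupper
          (fun n => (hmem n).1) hle
      have htend' : Tendsto (fun n => q n x) atTop (𝓝[Icc x b] x) :=
        tendsto_nhdsWithin_of_tendsto_nhds_of_eventually_within _ htend
          (Eventually.of_forall hmem)
      exact (hf x hx).tendsto.comp htend'
    · simp only [Set.indicator_of_notMem hx]
      exact tendsto_const_nhds

open Filter Topology in
/-- A càdlàg function on a compact interval is bounded. -/
lemma cadlag_aux_bdd {d : ℕ} (a b : ℝ) (f : ℝ → EuclideanSpace ℝ (Fin d))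
    (hf : CadlagOn a b f) : ∃ C : ℝ, ∀ x ∈ Icc a b, ‖f x‖ ≤ C := by
  have key : ∀ s : ℝ, ∃ C : ℝ, s ∈ Icc a b → ∀ᶠ x in 𝓝[Icc a b] s, ‖f x‖ ≤ C := by
    intro s
    by_cases hs : s ∈ Icc a b
    swap
    · exact ⟨0, fun h => absurd h hs⟩
    -- right bound
    have hright : ∀ᶠ x in 𝓝[Icc s b] s, ‖f x‖ ≤ ‖f s‖ + 1 := by
      have h1 : ∀ᶠ x in 𝓝[Icc s b] s, f x ∈ Metric.ball (f s) 1 :=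
        (hf.1 s hs) (Metric.ball_mem_nhds _ one_pos)
      filter_upwards [h1] with x hx
      have : dist (f x) (f s) < 1 := hx
      calc ‖f x‖ ≤ ‖f s‖ + dist (f x) (f s) := by
            rw [dist_eq_norm]
            have := norm_add_le (f x - f s) (f s)
            simpa [add_comm] using this
        _ ≤ ‖f s‖ + 1 := by linarith
    -- left bound
    obtain ⟨Cl, hleft⟩ : ∃ Cl, ∀ᶠ x in 𝓝[Ico a s] s, ‖f x‖ ≤ Cl := by
      by_cases has : a < s
      · obtain ⟨L, hL⟩ := hf.2 s ⟨has, hs.2⟩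
        refine ⟨‖L‖ + 1, ?_⟩
        have h1 : ∀ᶠ x in 𝓝[Ico a s] s, f x ∈ Metric.ball L 1 :=
          hL (Metric.ball_mem_nhds _ one_pos)
        filter_upwards [h1] with x hx
        have : dist (f x) L < 1 := hx
        calc ‖f x‖ ≤ ‖L‖ + dist (f x) L := by
              rw [dist_eq_norm]
              have := norm_add_le (f x - L) L
              simpa [add_comm] using this
          _ ≤ ‖L‖ + 1 := by linarith
      · refine ⟨0, ?_⟩
        have : Ico a s = ∅ := Ico_eq_empty has
        rw [this]
        simp
    refine ⟨max Cl (‖f s‖ + 1), fun _ => ?_⟩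
    have hsub : Icc a b ⊆ Ico a s ∪ Icc s b := by
      intro x hx
      rcases lt_or_ge x s with h | h
      · exact Or.inl ⟨hx.1, h⟩
      · exact Or.inr ⟨h, hx.2⟩
    have hmono : 𝓝[Icc a b] s ≤ 𝓝[Ico a s] s ⊔ 𝓝[Icc s b] s := by
      rw [← nhdsWithin_union]
      exact nhdsWithin_mono _ hsub
    refine Eventually.filter_mono hmono ?_
    rw [eventually_sup]
    exact ⟨hleft.mono fun x hx => hx.trans (le_max_left _ _),
      hright.mono fun x hx => hx.trans (le_max_right _ _)⟩
  choose C hC using key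
  set U : ℝ → Set ℝ := fun s => {x | x ∈ Icc a b → ‖f x‖ ≤ C s} with hU
  have hUnhds : ∀ s ∈ Icc a b, U s ∈ 𝓝 s := by
    intro s hs
    have := (hC s hs)
    rw [eventually_nhdsWithin_iff] at this
    exact this
  obtain ⟨t, _, hcov⟩ := isCompact_Icc.elim_nhds_subcover U hUnhds
  obtain ⟨M, hM⟩ := (t.finite_toSet.image C).bddAbove
  refine ⟨M, fun x hx => ?_⟩
  obtain ⟨s, hst, hxs⟩ := Set.mem_iUnion₂.mp (hcov hx)
  exact (hxs hx).trans (hM ⟨s, hst, rfl⟩)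

/-- Existence of left limits of the `M^p`-valued segment map of a càdlàg path
`Y : [-r,T] → ℝ^d`: for `t ∈ (0,T]`, if `L` is the left limit of `Y` at `t`, then the
segment at `t - ε` converges in `M^p` to `Y_t⁻`, defined by `Y_t⁻(θ) = Y(t+θ)` for
`θ ∈ [-r,0)` and `Y_t⁻(0) = L`, as `ε → 0⁺`. -/
theorem segment_map_left_limits (r p T : ℝ) (hr : 0 < r) (hp : 2 ≤ p) (hT : 0 < T)
    (d : ℕ) (Y : ℝ → EuclideanSpace ℝ (Fin d)) (hY : CadlagOn (-r) T Y)
    (t : ℝ) (ht : t ∈ Ioc 0 T) (L : EuclideanSpace ℝ (Fin d))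
    (hL : Filter.Tendsto Y (nhdsWithin t (Ico (-r) t)) (nhds L)) :
    Filter.Tendsto
      (fun ε => (∫ θ in Icc (-r) (0:ℝ),
          ‖Y (t - ε + θ) - (if θ < 0 then Y (t + θ) else L)‖ ^ p)
        + ‖Y (t - ε) - L‖ ^ p)
      (nhdsWithin 0 (Ioc 0 t)) (nhds 0) := by
  classical
  obtain ⟨ht0, htT⟩ := ht
  have hp0 : (0:ℝ) < p := lt_of_lt_of_le two_pos hp
  set p' : ℝ≥0∞ := ENNReal.ofReal p with hp'def
  have hp'1 : 1 ≤ p' := by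
    rw [hp'def, show (1:ℝ≥0∞) = ENNReal.ofReal 1 by simp]
    exact ENNReal.ofReal_le_ofReal (by linarith)
  haveI : Fact (1 ≤ p') := ⟨hp'1⟩
  have hp'0 : p' ≠ 0 := by
    simp [hp'def, ENNReal.ofReal_eq_zero, not_le, hp0]
  have hp'top : p' ≠ ∞ := ENNReal.ofReal_ne_top
  have hp't : p'.toReal = p := ENNReal.toReal_ofReal hp0.le
  set g : ℝ → EuclideanSpace ℝ (Fin d) := (Icc (-r) T).indicator Y with hgdef
  have hsm : StronglyMeasurable g := cadlag_aux_sm (-r) T Y hY.1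
  obtain ⟨C, hC⟩ := cadlag_aux_bdd (-r) T Y hY
  have hmem : MemLp g p' volume := by
    refine ⟨hsm.aestronglyMeasurable, ?_⟩
    have hmono : eLpNorm g p' volume ≤
        eLpNorm ((Icc (-r) T).indicator (fun _ => max C 0) : ℝ → ℝ) p' volume := by
      apply eLpNorm_mono
      intro x
      by_cases hx : x ∈ Icc (-r) T
      · simp only [hgdef, Set.indicator_of_mem hx]
        rw [Real.norm_eq_abs, abs_of_nonneg (le_max_right _ _)]
        exact (hC x hx).trans (le_max_left _ _)
      · simp [hgdef, Set.indicator_of_notMem hx]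
    refine hmono.trans_lt ?_
    rw [eLpNorm_indicator_const measurableSet_Icc hp'0 hp'top]
    exact ENNReal.mul_lt_top ENNReal.coe_lt_top
      (ENNReal.rpow_lt_top_of_nonneg (by positivity) measure_Icc_lt_top.ne)
  set G : Lp (EuclideanSpace ℝ (Fin d)) p' volume := hmem.toLp g with hGdef
  set c : ℝ → C(ℝ, ℝ) := fun ε => ContinuousMap.mk (fun x => x - ε) (by fun_prop) with hcdef
  have hc : Continuous c := by
    apply ContinuousMap.continuous_of_continuous_uncurry
    have : (Function.uncurry fun (x y : ℝ) => (c x) y) = fun q : ℝ × ℝ => q.2 - q.1 := rfl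
    rw [this]
    fun_prop
  have hmp : ∀ ε : ℝ, MeasurePreserving (c ε) volume volume := fun ε =>
    measurePreserving_sub_right volume ε
  set Φ : ℝ → Lp (EuclideanSpace ℝ (Fin d)) p' volume :=
    fun ε => Lp.compMeasurePreserving (c ε) (hmp ε) G with hΦdef
  have hΦc : Continuous Φ := continuous_const.compMeasurePreservingLp hc hmp hp'top
  have hΦ0 : Φ 0 = G := by
    apply Lp.ext
    have h1 := Lp.coeFn_compMeasurePreserving G (hmp 0)
    refine h1.trans ?_
    simp only [hcdef, ContinuousMap.coe_mk, Function.comp_def, sub_zero]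
    exact Filter.EventuallyEq.rfl
  have hnorm : Tendsto (fun ε => ‖Φ ε - G‖) (nhdsWithin 0 (Ioc 0 t)) (𝓝 0) := by
    have h1 : Tendsto Φ (𝓝 (0:ℝ)) (𝓝 G) := by
      have := hΦc.tendsto 0
      rwa [hΦ0] at this
    have h2 : Tendsto (fun ε => ‖Φ ε - G‖) (𝓝 (0:ℝ)) (𝓝 ‖G - G‖) :=
      ((h1.sub tendsto_const_nhds).norm)
    rw [sub_self, norm_zero] at h2
    exact h2.mono_left nhdsWithin_le_nhds
  have hrpow0 : ContinuousAt (fun x : ℝ => x ^ p) 0 :=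
    Real.continuousAt_rpow_const 0 p (Or.inr hp0.le)
  have hnormp : Tendsto (fun ε => ‖Φ ε - G‖ ^ p) (nhdsWithin 0 (Ioc 0 t)) (𝓝 0) := by
    have := (hrpow0.tendsto).comp hnorm
    simpa [Real.zero_rpow hp0.ne', Function.comp_def] using this
  -- second term
  have hsecond : Tendsto (fun ε => ‖Y (t - ε) - L‖ ^ p) (nhdsWithin 0 (Ioc 0 t)) (𝓝 0) := by
    have h1 : Tendsto (fun ε : ℝ => t - ε) (nhdsWithin 0 (Ioc 0 t))
        (nhdsWithin t (Ico (-r) t)) := by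
      refine tendsto_nhdsWithin_of_tendsto_nhds_of_eventually_within _ ?_ ?_
      · have : Tendsto (fun ε : ℝ => t - ε) (𝓝 0) (𝓝 (t - 0)) :=
          (continuous_const.sub continuous_id).tendsto 0
        rw [sub_zero] at this
        exact this.mono_left nhdsWithin_le_nhds
      · filter_upwards [self_mem_nhdsWithin] with ε hε
        exact ⟨by linarith [hε.1, hε.2], by linarith [hε.1]⟩
    have h2 : Tendsto (fun ε : ℝ => Y (t - ε)) (nhdsWithin 0 (Ioc 0 t)) (𝓝 L) := hL.comp h1
    have h3 : Tendsto (fun ε : ℝ => ‖Y (t - ε) - L‖) (nhdsWithin 0 (Ioc 0 t)) (𝓝 0) := by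
      have := (h2.sub (tendsto_const_nhds (x := L))).norm
      simpa using this
    have := (hrpow0.tendsto).comp h3
    simpa [Real.zero_rpow hp0.ne', Function.comp_def] using this
  -- first term
  have hmain : Tendsto (fun ε => ∫ θ in Icc (-r) (0:ℝ),
      ‖Y (t - ε + θ) - (if θ < 0 then Y (t + θ) else L)‖ ^ p)
      (nhdsWithin 0 (Ioc 0 t)) (𝓝 0) := by
    apply squeeze_zero' (g := fun ε => ‖Φ ε - G‖ ^ p)
    · filter_upwards with ε
      exact integral_nonneg fun θ => by positivity
    · filter_upwards [self_mem_nhdsWithin] with ε hε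
      obtain ⟨hε0, hεt⟩ := hε
      set u : ℝ → EuclideanSpace ℝ (Fin d) := ⇑(Φ ε - G) with hudef
      have hu : u =ᵐ[volume] fun x => g (x - ε) - g x := by
        have h1 : u =ᵐ[volume] ⇑(Φ ε) - ⇑G := Lp.coeFn_sub (Φ ε) G
        have h2 : ⇑(Φ ε) =ᵐ[volume] ⇑G ∘ (c ε) := Lp.coeFn_compMeasurePreserving G (hmp ε)
        have h3 : ⇑G =ᵐ[volume] g := hmem.coeFn_toLp
        have h4 : (⇑G ∘ (c ε) : ℝ → EuclideanSpace ℝ (Fin d)) =ᵐ[volume]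
            (g ∘ (c ε) : ℝ → EuclideanSpace ℝ (Fin d)) :=
          (hmp ε).quasiMeasurePreserving.ae_eq_comp h3
        filter_upwards [h1, h2, h3, h4] with x hx1 hx2 hx3 hx4
        simp only [hx1, Pi.sub_apply, hx2, hx3, hx4]
        rfl
      have humem : MemLp u p' volume := Lp.memLp _
      have hint : Integrable (fun x => ‖u x‖ ^ p) volume := by
        have := humem.integrable_norm_rpow hp'0 hp'top
        rwa [hp't] at this
      have hintnonneg : 0 ≤ ∫ x, ‖u x‖ ^ p ∂volume :=
        integral_nonneg fun x => by positivity
      have hnormeq : ‖Φ ε - G‖ ^ p = ∫ x, ‖u x‖ ^ p ∂volume := by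
        rw [Lp.norm_def, humem.eLpNorm_eq_integral_rpow_norm hp'0 hp'top, hp't,
          ENNReal.toReal_ofReal (Real.rpow_nonneg hintnonneg _),
          ← Real.rpow_mul hintnonneg, inv_mul_cancel₀ hp0.ne', Real.rpow_one]
      rw [hnormeq]
      -- now the integral inequality
      set H : ℝ → ℝ := fun x => ‖g (x - ε) - g x‖ ^ p with hHdef
      have hHint : Integrable H volume := hint.congr (by
        filter_upwards [hu] with x hx
        rw [hHdef]
        simp [hx])
      have step1 : (∫ θ in Icc (-r) (0:ℝ),
          ‖Y (t - ε + θ) - (if θ < 0 then Y (t + θ) else L)‖ ^ p)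
          = ∫ θ in Icc (-r) (0:ℝ), H (t + θ) := by
        apply setIntegral_congr_ae measurableSet_Icc
        have h0 : ∀ᵐ θ : ℝ, θ ≠ 0 := by
          rw [ae_iff]
          have : {θ : ℝ | ¬ θ ≠ 0} = {0} := by ext θ; simp
          rw [this]
          exact measure_singleton 0
        filter_upwards [h0] with θ hθ hmemθ
        have hθlt : θ < 0 := lt_of_le_of_ne hmemθ.2 hθ
        have hθr : -r ≤ θ := hmemθ.1
        rw [if_pos hθlt, hHdef]
        have e1 : g (t + θ - ε) = Y (t - ε + θ) := by
          rw [hgdef, Set.indicator_of_mem, show t + θ - ε = t - ε + θ by ring]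
          constructor <;> [linarith; linarith]
        have e2 : g (t + θ) = Y (t + θ) := by
          rw [hgdef, Set.indicator_of_mem]
          constructor <;> [linarith; linarith]
        simp only [e1, e2]
      rw [step1]
      have step2 : ∫ θ in Icc (-r) (0:ℝ), H (t + θ) ≤ ∫ θ : ℝ, H (t + θ) := by
        apply setIntegral_le_integral
        · exact ((measurePreserving_add_left volume t).integrable_comp
            hHint.aestronglyMeasurable).mpr hHint
        · filter_upwards with θ
          rw [hHdef]
          positivity
      have step3 : (∫ θ : ℝ, H (t + θ)) = ∫ x, H x := integral_add_left_eq_self H t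
      have step4 : (∫ x, H x) = ∫ x, ‖u x‖ ^ p ∂volume := by
        apply integral_congr_ae
        filter_upwards [hu] with x hx
        rw [hHdef]
        simp [hx]
      linarith [step2, step3.le, step3.ge, step4.le]
    · exact hnormp
  have := hmain.add hsecond
  simpa using this
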